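/- For constants a, b > 0 and c > 0, the function g(t) = a·t·(2^{c/t} − 1) + b·t·(2^{c/t} − 1)² is convex on t ∈ (0, ∞). -/

import Mathlib

open Real Set

lemma h_aux_convex (a b : ℝ) (ha : 0 ≤ a) (hb : 0 ≤ b) :
    ConvexOn ℝ (Set.Ici (0:ℝ))
      (fun x : ℝ => a * (Real.exp x - 1) + b * (Real.exp x - 1) ^ 2) := by
  have hbase : ConvexOn ℝ (Set.Ici (0:ℝ)) (fun x : ℝ => Real.exp x - 1) := by
    have := (convexOn_exp.subset (Set.subset_univ _) (convex_Ici 0)).add_const (-1)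
    exact this.congr (fun x _ => by simp [sub_eq_add_neg])
  have hnn : ∀ ⦃x : ℝ⦄, x ∈ Set.Ici (0:ℝ) → 0 ≤ Real.exp x - 1 := by
    intro x hx
    have : (1:ℝ) ≤ Real.exp x := Real.one_le_exp hx
    linarith
  have hsq : ConvexOn ℝ (Set.Ici (0:ℝ)) (fun x : ℝ => (Real.exp x - 1) ^ 2) := by
    have := hbase.pow hnn 2
    exact this.congr (fun x _ => by simp [Pi.pow_apply])
  have h1 := hbase.smul ha
  have h2 := hsq.smul hb
  exact (h1.add h2).congr (fun x _ => by simp [smul_eq_mul])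

theorem stmt_1 (a b c : ℝ) (ha : 0 < a) (hb : 0 < b) (hc : 0 < c) :
    ConvexOn ℝ (Set.Ioi (0 : ℝ))
      (fun t : ℝ => a * t * ((2 : ℝ) ^ (c / t) - 1) + b * t * ((2 : ℝ) ^ (c / t) - 1) ^ 2) := by
  set d : ℝ := Real.log 2 * c with hd
  have hd0 : 0 < d := mul_pos (Real.log_pos one_lt_two) hc
  set h : ℝ → ℝ := fun x => a * (Real.exp x - 1) + b * (Real.exp x - 1) ^ 2 with hh
  have hconv := h_aux_convex a b ha.le hb.le
  have key : ∀ t : ℝ, 0 < t →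
      a * t * ((2 : ℝ) ^ (c / t) - 1) + b * t * ((2 : ℝ) ^ (c / t) - 1) ^ 2
        = t * h (d / t) := by
    intro t ht
    have h2 : (2 : ℝ) ^ (c / t) = Real.exp (d / t) := by
      rw [Real.rpow_def_of_pos two_pos, hd, mul_div_assoc]
    rw [h2, hh]; ring
  constructor
  · exact convex_Ioi 0
  · intro t1 ht1 t2 ht2 p q hp hq hpq
    simp only [smul_eq_mul] at *
    have ht1' : (0:ℝ) < t1 := ht1
    have ht2' : (0:ℝ) < t2 := ht2
    have hs : 0 < p * t1 + q * t2 := by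
      rcases eq_or_lt_of_le hp with h | h
      · rw [← h] at hpq ⊢; simp at hpq; nlinarith
      · nlinarith
    set s := p * t1 + q * t2 with hsdef
    rw [key _ hs, key _ ht1', key _ ht2']
    have hmem1 : d / t1 ∈ Set.Ici (0:ℝ) := le_of_lt (div_pos hd0 ht1')
    have hmem2 : d / t2 ∈ Set.Ici (0:ℝ) := le_of_lt (div_pos hd0 ht2')
    have hw1 : 0 ≤ p * t1 / s := div_nonneg (by positivity) hs.le
    have hw2 : 0 ≤ q * t2 / s := div_nonneg (by positivity) hs.le
    have hwsum : p * t1 / s + q * t2 / s = 1 := by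
      field_simp; exact hsdef.symm
    have hcomb := hconv.2 hmem1 hmem2 hw1 hw2 hwsum
    have harg : (p * t1 / s) • (d / t1) + (q * t2 / s) • (d / t2) = d / s := by
      have h1 : t1 ≠ 0 := ne_of_gt ht1'
      have h2 : t2 ≠ 0 := ne_of_gt ht2'
      have h3 : s ≠ 0 := ne_of_gt hs
      have e1 : p * t1 / s * (d / t1) = p * (d / s) := by field_simp
      have e2 : q * t2 / s * (d / t2) = q * (d / s) := by field_simp
      rw [smul_eq_mul, smul_eq_mul, e1, e2, ← add_mul, hpq, one_mul]
    rw [harg] at hcomb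
    simp only [smul_eq_mul] at hcomb
    calc s * h (d / s) ≤ s * (p * t1 / s * h (d / t1) + q * t2 / s * h (d / t2)) := by
          exact mul_le_mul_of_nonneg_left hcomb hs.le
      _ = p * (t1 * h (d / t1)) + q * (t2 * h (d / t2)) := by
          field_simp
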